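/- Let (A, 𝒜, μ) be a measure space, 𝒢 ⊂ 𝒜 a sub-σ-algebra with the restricted measure σ-finite, X a Banach space and Y = X* its dual (or more generally ⟨X,Y⟩ a Banach dual pair such that both vector-valued conditional expectations exist). Then the duality relation ∫_A ⟨E¹_{𝒢,X} f, g⟩ dμ = ∫_A ⟨f, E^∞_{𝒢,Y} g⟩ dμ holds for all f ∈ L¹(A; X) and g ∈ L^∞(A; Y). -/

import Mathlib

open MeasureTheory
open scoped ENNReal NNReal

section Aux

variable {α : Type*} {m m0 : MeasurableSpace α} {μ : Measure α}
variable {X : Type*} [NormedAddCommGroup X] [NormedSpace ℝ X]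

/-- Elements of `L^∞` are a.e. bounded by their norm. -/
lemma linfty_ae_norm_le (h : Lp (X →L[ℝ] ℝ) ⊤ μ) : ∀ᵐ a ∂μ, ‖h a‖ ≤ ‖h‖ := by
  have h1 := enorm_ae_le_eLpNormEssSup (⇑h) μ
  have h2 : eLpNormEssSup (⇑h) μ ≠ ⊤ := by
    rw [← eLpNorm_exponent_top]; exact (Lp.eLpNorm_lt_top h).ne
  filter_upwards [h1] with a ha
  rw [Lp.norm_def, eLpNorm_exponent_top]
  calc ‖h a‖ = (‖h a‖ₑ).toReal := by simp
  _ ≤ (eLpNormEssSup (⇑h) μ).toReal := ENNReal.toReal_mono h2 ha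

lemma pairing_aesm (h : Lp (X →L[ℝ] ℝ) ⊤ μ) {f : α → X} (hf : AEStronglyMeasurable f μ) :
    AEStronglyMeasurable (fun a => h a (f a)) μ :=
  isBoundedBilinearMap_apply.continuous.comp_aestronglyMeasurable
    ((Lp.aestronglyMeasurable h).prodMk hf)

lemma pairing_integrable (h : Lp (X →L[ℝ] ℝ) ⊤ μ) {f : α → X} (hf : Integrable f μ) :
    Integrable (fun a => h a (f a)) μ := by
  refine Integrable.mono' (hf.norm.const_mul ‖h‖) (pairing_aesm h hf.aestronglyMeasurable) ?_
  filter_upwards [linfty_ae_norm_le h] with a ha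
  calc ‖h a (f a)‖ ≤ ‖h a‖ * ‖f a‖ := (h a).le_opNorm _
  _ ≤ ‖h‖ * ‖f a‖ := by gcongr

/-- The pairing of an `L^∞` dual-valued function against `L¹`, as a continuous linear map. -/
noncomputable def pairingCLM (h : Lp (X →L[ℝ] ℝ) ⊤ μ) : (α →₁[μ] X) →L[ℝ] ℝ :=
  LinearMap.mkContinuous
    { toFun := fun f => ∫ a, h a (f a) ∂μ
      map_add' := by
        intro f g
        rw [← integral_add (pairing_integrable h (L1.integrable_coeFn f))
            (pairing_integrable h (L1.integrable_coeFn g))]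
        refine integral_congr_ae ?_
        filter_upwards [Lp.coeFn_add f g] with a ha
        rw [ha]
        simp
      map_smul' := by
        intro r f
        rw [RingHom.id_apply, ← integral_smul]
        refine integral_congr_ae ?_
        filter_upwards [Lp.coeFn_smul r f] with a ha
        rw [ha]
        simp }
    ‖h‖
    (by
      intro f
      simp only [LinearMap.coe_mk, AddHom.coe_mk]
      have hb : ‖∫ a, h a (f a) ∂μ‖ ≤ ∫ a, ‖h‖ * ‖f a‖ ∂μ := by
        refine norm_integral_le_of_norm_le ((L1.integrable_coeFn f).norm.const_mul ‖h‖) ?_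
        filter_upwards [linfty_ae_norm_le h] with a ha
        calc ‖h a (f a)‖ ≤ ‖h a‖ * ‖f a‖ := (h a).le_opNorm _
        _ ≤ ‖h‖ * ‖f a‖ := by gcongr
      calc ‖∫ a, h a (f a) ∂μ‖ ≤ ∫ a, ‖h‖ * ‖f a‖ ∂μ := hb
      _ = ‖h‖ * ∫ a, ‖f a‖ ∂μ := integral_const_mul _ _
      _ = ‖h‖ * ‖f‖ := by rw [L1.norm_eq_integral_norm])

lemma pairingCLM_apply (h : Lp (X →L[ℝ] ℝ) ⊤ μ) (f : α →₁[μ] X) :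
    pairingCLM h f = ∫ a, h a (f a) ∂μ := rfl

lemma mul_integrable_of_bdd {φ : α → ℝ} (hφm : AEStronglyMeasurable φ μ) {C : ℝ}
    (hφb : ∀ᵐ a ∂μ, ‖φ a‖ ≤ C) {h : α → ℝ} (hh : Integrable h μ) :
    Integrable (fun a => h a * φ a) μ :=
  (hh.bdd_mul hφm hφb).congr (Filter.Eventually.of_forall fun a => mul_comm _ _)

/-- Key scalar fact: if two a.e.-bounded functions `φ` and `ψ` have equal integrals
over every `m`-measurable set of finite measure, then they pair equally against every
`m`-measurable integrable function. -/
lemma scalar_duality (hm : m ≤ m0) {μ : Measure α}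
    {φ ψ : α → ℝ} (hφm : AEStronglyMeasurable φ μ) {Cφ : ℝ} (hφb : ∀ᵐ a ∂μ, ‖φ a‖ ≤ Cφ)
    (hψm : AEStronglyMeasurable ψ μ) {Cψ : ℝ} (hψb : ∀ᵐ a ∂μ, ‖ψ a‖ ≤ Cψ)
    (hres : ∀ F : Set α, MeasurableSet[m] F → μ F < ⊤ →
      ∫ a in F, φ a ∂μ = ∫ a in F, ψ a ∂μ) :
    ∀ h : α → ℝ, Integrable h (μ.trim hm) → ∫ a, h a * φ a ∂μ = ∫ a, h a * ψ a ∂μ := by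
  have hcont : ∀ (θ : α → ℝ), AEStronglyMeasurable θ μ → ∀ C : ℝ, (∀ᵐ a ∂μ, ‖θ a‖ ≤ C) →
      Continuous (fun h : α →₁[μ.trim hm] ℝ => ∫ a, h a * θ a ∂μ) := by
    intro θ hθm C hθb
    have hCnn : (0:ℝ) ≤ max C 0 := le_max_right _ _
    refine (LipschitzWith.of_dist_le_mul (K := ⟨max C 0, hCnn⟩) ?_).continuous
    intro h₁ h₂
    have hi₁ : Integrable (⇑h₁) μ := integrable_of_integrable_trim hm (L1.integrable_coeFn h₁)
    have hi₂ : Integrable (⇑h₂) μ := integrable_of_integrable_trim hm (L1.integrable_coeFn h₂)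
    have hint₁ := mul_integrable_of_bdd hθm hθb hi₁
    have hint₂ := mul_integrable_of_bdd hθm hθb hi₂
    have hdiff : Integrable (fun a => h₁ a - h₂ a) μ := hi₁.sub hi₂
    have hsub : ⇑(h₁ - h₂) =ᵐ[μ] fun a => h₁ a - h₂ a :=
      ae_eq_of_ae_eq_trim (Lp.coeFn_sub h₁ h₂)
    rw [Real.dist_eq, ← Real.norm_eq_abs, ← integral_sub hint₁ hint₂]
    have step1 : ‖∫ a, (h₁ a * θ a - h₂ a * θ a) ∂μ‖ ≤ ∫ a, (max C 0) * ‖h₁ a - h₂ a‖ ∂μ := by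
      refine norm_integral_le_of_norm_le (hdiff.norm.const_mul _) ?_
      filter_upwards [hθb] with a ha
      rw [← sub_mul]
      calc ‖(h₁ a - h₂ a) * θ a‖ = ‖h₁ a - h₂ a‖ * ‖θ a‖ := norm_mul _ _
      _ ≤ ‖h₁ a - h₂ a‖ * max C 0 := by
            exact mul_le_mul_of_nonneg_left (ha.trans (le_max_left _ _)) (norm_nonneg _)
      _ = max C 0 * ‖h₁ a - h₂ a‖ := mul_comm _ _
    have step2 : ∫ a, (max C 0) * ‖h₁ a - h₂ a‖ ∂μ = (max C 0) * dist h₁ h₂ := by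
      rw [integral_const_mul]
      congr 1
      have e1 : ∫ a, ‖h₁ a - h₂ a‖ ∂μ = ∫ a, ‖(h₁ - h₂) a‖ ∂μ := by
        refine integral_congr_ae ?_
        filter_upwards [hsub] with a ha
        rw [ha]
      have e2 : ∫ a, ‖(h₁ - h₂) a‖ ∂μ = ∫ a, ‖(h₁ - h₂) a‖ ∂(μ.trim hm) :=
        integral_trim_ae hm (Lp.aestronglyMeasurable (h₁ - h₂)).norm
      rw [e1, e2, dist_eq_norm, L1.norm_eq_integral_norm]
    calc ‖∫ a, (h₁ a * θ a - h₂ a * θ a) ∂μ‖ ≤ ∫ a, (max C 0) * ‖h₁ a - h₂ a‖ ∂μ := step1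
    _ = (max C 0) * dist h₁ h₂ := step2
  intro h hh
  refine @Integrable.induction α ℝ m _ (μ.trim hm)
    (fun h : α → ℝ => ∫ a, h a * φ a ∂μ = ∫ a, h a * ψ a ∂μ) ?_ ?_ ?_ ?_ h hh
  · intro r F hF hμF
    have hμF' : μ F < ⊤ := by rwa [trim_measurableSet_eq hm hF] at hμF
    have h1 : ∀ θ : α → ℝ, ∫ a, (F.indicator fun _ => r) a * θ a ∂μ = r * ∫ a in F, θ a ∂μ := by
      intro θ
      have : (fun a => (F.indicator fun _ => r) a * θ a) = F.indicator (fun a => r * θ a) := by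
        ext a; by_cases hmem : a ∈ F <;> simp [hmem]
      rw [this, integral_indicator (hm F hF), integral_const_mul]
    rw [h1 φ, h1 ψ, hres F hF hμF']
  · intro f₁ f₂ _ hf₁ hf₂ hP₁ hP₂
    have hi₁ : Integrable f₁ μ := integrable_of_integrable_trim hm hf₁
    have hi₂ : Integrable f₂ μ := integrable_of_integrable_trim hm hf₂
    simp only [Pi.add_apply, add_mul]
    rw [integral_add (mul_integrable_of_bdd hφm hφb hi₁) (mul_integrable_of_bdd hφm hφb hi₂),
      integral_add (mul_integrable_of_bdd hψm hψb hi₁) (mul_integrable_of_bdd hψm hψb hi₂),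
      hP₁, hP₂]
  · exact isClosed_eq (hcont φ hφm Cφ hφb) (hcont ψ hψm Cψ hψb)
  · intro f₁ f₂ hae _ hP
    have hae' : f₁ =ᵐ[μ] f₂ := ae_eq_of_ae_eq_trim hae
    calc ∫ a, f₂ a * φ a ∂μ = ∫ a, f₁ a * φ a ∂μ :=
          integral_congr_ae (hae'.symm.mono fun a ha => by simp only [ha])
    _ = ∫ a, f₁ a * ψ a ∂μ := hP
    _ = ∫ a, f₂ a * ψ a ∂μ := integral_congr_ae (hae'.mono fun a ha => by simp only [ha])

variable [CompleteSpace X]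

/-- The conditional expectation of an indicator `1ₛ • x` is `μ[1ₛ|m] • x`. -/
lemma condexpL1CLM_indicator_smul (hm : m ≤ m0) {μ : Measure α} [SigmaFinite (μ.trim hm)]
    {s : Set α} (hs : MeasurableSet s) (hμs : μ s ≠ ⊤) (x : X) :
    ⇑(condExpL1CLM X hm μ (indicatorConstLp 1 hs hμs x))
      =ᵐ[μ] fun a => (μ[s.indicator fun _ => (1:ℝ) | m]) a • x := by
  have hind1 : Integrable (s.indicator fun _ => (1:ℝ)) μ :=
    (integrable_indicator_iff hs).2 (integrableOn_const hμs)
  have hindX : Integrable (s.indicator fun _ => x) μ :=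
    (integrable_indicator_iff hs).2 (integrableOn_const hμs)
  have hXsmul : (s.indicator fun _ => x) = fun a => (s.indicator (fun _ => (1:ℝ)) a) • x := by
    ext a; by_cases h : a ∈ s <;> simp [h]
  have hcondX : (fun a => (μ[s.indicator fun _ => (1:ℝ) | m]) a • x)
      =ᵐ[μ] μ[s.indicator fun _ => x | m] := by
    refine ae_eq_condExp_of_forall_setIntegral_eq hm hindX
      (fun F hF hμF => (integrable_condExp.smul_const x).integrableOn) (fun F hF hμF => ?_)
      (StronglyMeasurable.aestronglyMeasurable (stronglyMeasurable_condExp.smul_const x))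
    simp only [hXsmul]
    rw [integral_smul_const, integral_smul_const, setIntegral_condExp hm hind1 hF]
  have h1 : hindX.toL1 _ = indicatorConstLp 1 hs hμs x :=
    Lp.ext (hindX.coeFn_toL1.trans indicatorConstLp_coeFn.symm)
  have h2 := condExp_ae_eq_condExpL1CLM (E := X) hm hindX
  rw [h1] at h2
  exact h2.symm.trans hcondX.symm

/-- Pull-out: pairing `μ[1ₛ|m]` against a bounded `m`-measurable `ψ` equals pairing `1ₛ`
against `ψ`. -/
lemma condexp_indicator_pair (hm : m ≤ m0) {μ : Measure α} [SigmaFinite (μ.trim hm)]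
    {ψ : α → ℝ} (hψm : StronglyMeasurable[m] ψ) {Cψ : ℝ} (hψb : ∀ᵐ a ∂μ, ‖ψ a‖ ≤ Cψ)
    {s : Set α} (hs : MeasurableSet s) (hμs : μ s ≠ ⊤) :
    ∫ a, (μ[s.indicator fun _ => (1:ℝ) | m]) a * ψ a ∂μ
      = ∫ a, s.indicator (fun _ => (1:ℝ)) a * ψ a ∂μ := by
  have hψm0 : AEStronglyMeasurable ψ μ := (hψm.mono hm).aestronglyMeasurable
  have hind1 : Integrable (s.indicator fun _ => (1:ℝ)) μ :=
    (integrable_indicator_iff hs).2 (integrableOn_const hμs)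
  have hint : Integrable (ψ * s.indicator fun _ => (1:ℝ)) μ :=
    hind1.bdd_mul hψm0 hψb
  have hpull := condExp_mul_of_stronglyMeasurable_left hψm hint hind1
  calc ∫ a, (μ[s.indicator fun _ => (1:ℝ) | m]) a * ψ a ∂μ
      = ∫ a, (ψ * μ[s.indicator fun _ => (1:ℝ) | m]) a ∂μ :=
        integral_congr_ae (Filter.Eventually.of_forall fun a => mul_comm _ _)
  _ = ∫ a, (μ[ψ * s.indicator fun _ => (1:ℝ) | m]) a ∂μ := (integral_congr_ae hpull).symm
  _ = ∫ a, (ψ * s.indicator fun _ => (1:ℝ)) a ∂μ := integral_condExp hm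
  _ = ∫ a, s.indicator (fun _ => (1:ℝ)) a * ψ a ∂μ :=
        integral_congr_ae (Filter.Eventually.of_forall fun a => mul_comm _ _)

/-- The duality identity for indicator functions. -/
lemma key_indicator (hm : m ≤ m0) {μ : Measure α} [SigmaFinite (μ.trim hm)]
    (g G : Lp (X →L[ℝ] ℝ) ⊤ μ) (g' : α → X →L[ℝ] ℝ)
    (hg'm : StronglyMeasurable[m] g') (hg'ae : ⇑G =ᵐ[μ] g')
    (havg : ∀ F : Set α, MeasurableSet[m] F → μ F < ⊤ →
      ∫ a in F, g a ∂μ = ∫ a in F, G a ∂μ)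
    (x : X) {s : Set α} (hs : MeasurableSet s) (hμs : μ s ≠ ⊤) :
    ∫ a, g a ((condExpL1CLM X hm μ (indicatorConstLp 1 hs hμs x)) a) ∂μ
      = ∫ a, G a ((indicatorConstLp 1 hs hμs x : α →₁[μ] X) a) ∂μ := by
  have hφm : AEStronglyMeasurable (fun a => g a x) μ :=
    (ContinuousLinearMap.apply ℝ ℝ x).continuous.comp_aestronglyMeasurable
      (Lp.aestronglyMeasurable g)
  have hφb : ∀ᵐ a ∂μ, ‖g a x‖ ≤ ‖g‖ * ‖x‖ := by
    filter_upwards [linfty_ae_norm_le g] with a ha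
    calc ‖g a x‖ ≤ ‖g a‖ * ‖x‖ := (g a).le_opNorm x
    _ ≤ ‖g‖ * ‖x‖ := by gcongr
  have hψm : StronglyMeasurable[m] (fun a => g' a x) :=
    (ContinuousLinearMap.apply ℝ ℝ x).continuous.comp_stronglyMeasurable hg'm
  have hψm0 : AEStronglyMeasurable (fun a => g' a x) μ := (hψm.mono hm).aestronglyMeasurable
  have hψb : ∀ᵐ a ∂μ, ‖g' a x‖ ≤ ‖G‖ * ‖x‖ := by
    filter_upwards [linfty_ae_norm_le G, hg'ae] with a ha hb
    calc ‖g' a x‖ ≤ ‖g' a‖ * ‖x‖ := (g' a).le_opNorm x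
    _ ≤ ‖G‖ * ‖x‖ := by rw [← hb]; gcongr
  have hXsmul : (s.indicator fun _ => x) = fun a => (s.indicator (fun _ => (1:ℝ)) a) • x := by
    ext a; by_cases h : a ∈ s <;> simp [h]
  -- LHS = ∫ μ[1ₛ|m] * ⟨x, g⟩
  have hL : ∫ a, g a ((condExpL1CLM X hm μ (indicatorConstLp 1 hs hμs x)) a) ∂μ
      = ∫ a, (μ[s.indicator fun _ => (1:ℝ) | m]) a * (g a x) ∂μ := by
    refine integral_congr_ae ?_
    filter_upwards [condexpL1CLM_indicator_smul hm hs hμs x] with a ha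
    rw [ha, ContinuousLinearMap.map_smul, smul_eq_mul]
  -- RHS = ∫ 1ₛ * ⟨x, g'⟩
  have hR : ∫ a, G a ((indicatorConstLp 1 hs hμs x : α →₁[μ] X) a) ∂μ
      = ∫ a, s.indicator (fun _ => (1:ℝ)) a * (g' a x) ∂μ := by
    refine integral_congr_ae ?_
    filter_upwards [hg'ae, indicatorConstLp_coeFn (p := 1) (hs := hs) (hμs := hμs) (c := x)]
      with a ha hb
    rw [ha, hb]
    by_cases hmem : a ∈ s <;> simp [hmem]
  -- set-integral equality on m-measurable sets
  have hres : ∀ F : Set α, MeasurableSet[m] F → μ F < ⊤ →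
      ∫ a in F, g a x ∂μ = ∫ a in F, g' a x ∂μ := by
    intro F hF hμF
    have hgint : IntegrableOn (⇑g) F μ := by
      refine Integrable.mono' ((integrableOn_const (C := ‖g‖) hμF.ne))
        (Lp.aestronglyMeasurable g).restrict ?_
      exact ae_restrict_of_ae (linfty_ae_norm_le g)
    have hGint : IntegrableOn (⇑G) F μ := by
      refine Integrable.mono' ((integrableOn_const (C := ‖G‖) hμF.ne))
        (Lp.aestronglyMeasurable G).restrict ?_
      exact ae_restrict_of_ae (linfty_ae_norm_le G)
    calc ∫ a in F, g a x ∂μ = (∫ a in F, g a ∂μ) x :=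
          (ContinuousLinearMap.integral_apply hgint x).symm
    _ = (∫ a in F, G a ∂μ) x := by rw [havg F hF hμF]
    _ = ∫ a in F, G a x ∂μ := ContinuousLinearMap.integral_apply hGint x
    _ = ∫ a in F, g' a x ∂μ := by
          refine integral_congr_ae (ae_restrict_of_ae ?_)
          filter_upwards [hg'ae] with a ha
          rw [ha]
  have hc_trim : Integrable (μ[s.indicator fun _ => (1:ℝ) | m]) (μ.trim hm) :=
    integrable_condExp.trim hm stronglyMeasurable_condExp
  have mid1 := scalar_duality hm hφm hφb hψm0 hψb hres _ hc_trim
  have mid2 := condexp_indicator_pair hm hψm hψb hs hμs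
  rw [hL, hR, mid1, mid2]

end Aux

/-- **Duality between conditional expectation on `L¹(A;X)` and on `L^∞(A;Y)` with
`Y = X*`.** Let `m ≤ m0` have σ-finite trace, `X` a Banach space, `Y = X*`. If `Q`
is the conditional expectation on `L^∞(μ; X*)` (characterized by having strongly
`m`-measurable values and the averaging property on `m`-measurable sets of finite
measure), then `∫ ⟨E¹_{𝒢,X} f, g⟩ dμ = ∫ ⟨f, Q g⟩ dμ` for all `f ∈ L¹(μ; X)` and
`g ∈ L^∞(μ; X*)`. -/
theorem condexp_l1_linfty_duality
    {α : Type*} {m m0 : MeasurableSpace α} (μ : Measure α) (hm : m ≤ m0)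
    [SigmaFinite (μ.trim hm)]
    (X : Type*) [NormedAddCommGroup X] [NormedSpace ℝ X] [CompleteSpace X]
    (Q : Lp (X →L[ℝ] ℝ) ⊤ μ →L[ℝ] Lp (X →L[ℝ] ℝ) ⊤ μ)
    (hQrange : ∀ g : Lp (X →L[ℝ] ℝ) ⊤ μ,
      ∃ g' : α → X →L[ℝ] ℝ, StronglyMeasurable[m] g' ∧ ⇑(Q g) =ᵐ[μ] g')
    (hQfix : ∀ g : Lp (X →L[ℝ] ℝ) ⊤ μ,
      (∃ g' : α → X →L[ℝ] ℝ, StronglyMeasurable[m] g' ∧ ⇑g =ᵐ[μ] g') → Q g = g)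
    (hQavg : ∀ (g : Lp (X →L[ℝ] ℝ) ⊤ μ) (F : Set α), MeasurableSet[m] F → μ F < ⊤ →
      ∫ a in F, g a ∂μ = ∫ a in F, (Q g) a ∂μ) :
    ∀ (f : α →₁[μ] X) (g : Lp (X →L[ℝ] ℝ) ⊤ μ),
      ∫ a, (g a) ((condExpL1CLM X hm μ f) a) ∂μ = ∫ a, ((Q g) a) (f a) ∂μ := by
  intro f g
  obtain ⟨g', hg'm, hg'ae⟩ := hQrange g
  have hmain : ∀ f : α →₁[μ] X,
      pairingCLM g ((condExpL1CLM X hm μ) f) = pairingCLM (Q g) f := by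
    refine Lp.induction ENNReal.one_ne_top _ ?_ ?_ ?_
    · intro x s hs hμs
      rw [Lp.simpleFunc.coe_indicatorConst]
      exact key_indicator hm g (Q g) g' hg'm hg'ae (hQavg g) x hs hμs.ne
    · intro f₁ f₂ hf₁ hf₂ _ h₁ h₂
      simp only [map_add, h₁, h₂]
    · exact isClosed_eq ((pairingCLM g).continuous.comp (condExpL1CLM X hm μ).continuous)
        (pairingCLM (Q g)).continuous
  exact hmain f
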